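/- arXiv:1510.03278 — 4 statements merged into one kernel-verified Lean document; each statement's English description precedes it below -/
import Mathlib

section
/- If every transition of a tree automaton over the state set Q' of the saturated automaton is sound with respect to the semantics ⟦·⟧, then L(p) ⊆ ⟦p⟧ for every state p ∈ Q'. -/
namespace OTPS

/-! ### Ranked ordered alphabets and trees -/

/-- Data of a ranked ordered alphabet: each symbol has a rank (arity) and an order. -/
structure SymData (α : Type) where
  rank : α → ℕ
  ord : α → ℕ

/-- Finite trees labelled by `α`. -/
inductive TTree (α : Type) : Type
  | node (a : α) (ts : List (TTree α)) : TTree α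

namespace TTree

/-- Root label of a tree. -/
def root {α : Type} : TTree α → α
  | node a _ => a

end TTree

/-- Well-formedness of a tree w.r.t. a rank function: every node labelled `a`
has exactly `rk a` children. -/
inductive WFT {α : Type} (rk : α → ℕ) : TTree α → Prop
  | node {a : α} {ts : List (TTree α)} :
      ts.length = rk a → (∀ t ∈ ts, WFT rk t) → WFT rk (.node a ts)

/-- The variable `x` occurs in a term over `α ⊕ ν` (`ν` = variables). -/
inductive OccursIn {α ν : Type} (x : ν) : TTree (α ⊕ ν) → Prop
  | here (ts : List (TTree (α ⊕ ν))) : OccursIn x (.node (.inr x) ts)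
  | child {a : α ⊕ ν} {ts : List (TTree (α ⊕ ν))} {t : TTree (α ⊕ ν)} :
      t ∈ ts → OccursIn x t → OccursIn x (.node a ts)

/-- A term that is just a variable. -/
def IsVarTerm {α ν : Type} (t : TTree (α ⊕ ν)) : Prop :=
  ∃ x : ν, t = .node (.inr x) []

/-- `u` is `r`-ground: `u` shares no variables with `r`. -/
def RGround {α ν : Type} (r u : TTree (α ⊕ ν)) : Prop :=
  ∀ x : ν, OccursIn x u → ¬ OccursIn x r

/-- A term is linear if every variable occurs at most once in it. -/
inductive Linear {α ν : Type} : TTree (α ⊕ ν) → Prop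
  | node {a : α ⊕ ν} {ts : List (TTree (α ⊕ ν))} :
      (∀ t ∈ ts, Linear t) →
      List.Pairwise (fun s t => ∀ x : ν, OccursIn x s → ¬ OccursIn x t) ts →
      Linear (.node a ts)

/-- Order of the root symbol of a term. -/
def termOrd {α ν : Type} (sd : SymData α) (ordv : ν → ℕ) : TTree (α ⊕ ν) → ℕ
  | .node (.inl a) _ => sd.ord a
  | .node (.inr x) _ => ordv x

/-- Rank function on `α ⊕ ν`: variables have rank `0`. -/
def termRank {α ν : Type} (sd : SymData α) : α ⊕ ν → ℕ
  | .inl a => sd.rank a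
  | .inr _ => 0

/-- Applying a ground substitution to a term. -/
def substG {α ν : Type} (σ : ν → TTree α) : TTree (α ⊕ ν) → TTree α
  | .node (.inl a) ts => .node a (ts.attach.map (fun t => substG σ t.1))
  | .node (.inr x) _ => σ x
decreasing_by
  have h1 : sizeOf t.1 < sizeOf ts := List.sizeOf_lt_of_mem t.2
  simp only [TTree.node.sizeOf_spec]
  omega

/-! ### Alternating transition systems and backward reachability -/

/-- One step of the alternating transition relation, lifted to sets of configurations:
`Step1 tr A B` holds iff every `c ∈ A` either belongs to `B` or has a transition
`tr c D` with `D ⊆ B`. -/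
def Step1 {C : Type} (tr : C → Set C → Prop) (A B : Set C) : Prop :=
  ∀ c ∈ A, c ∈ B ∨ ∃ D : Set C, tr c D ∧ D ⊆ B

/-- Backward reachability: the set of configurations `c` with `{c} →₁* T`. -/
def preStar {C : Type} (tr : C → Set C → Prop) (T : Set C) : Set C :=
  {c | Relation.ReflTransGen (Step1 tr) {c} T}

/-! ### Alternating tree automata -/

/-- An alternating tree automaton over alphabet `α` with states `Q`:
a set of transitions `p →^a P₁ ⋯ P_m`. -/
structure ATA (α Q : Type) where
  delta : Set (Q × α × List (Set Q))

/-- Acceptance of a (ground) tree from a state. -/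
inductive ATA.Accepts {α Q : Type} (A : ATA α Q) : Q → TTree α → Prop
  | node {p : Q} {a : α} {ts : List (TTree α)} {Ps : List (Set Q)} :
      (p, a, Ps) ∈ A.delta → Ps.length = ts.length →
      (∀ (i : ℕ) (h1 : i < ts.length) (h2 : i < Ps.length),
        ∀ q ∈ Ps.get ⟨i, h2⟩, ATA.Accepts A q (ts.get ⟨i, h1⟩)) →
      ATA.Accepts A p (.node a ts)

/-- The language of configurations recognized by `A` from the set `P`. -/
def ATA.lang {α Q : Type} (A : ATA α Q) (P : Set Q) : Set (Q × TTree α) :=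
  {c | c.1 ∈ P ∧ A.Accepts c.1 c.2}

/-- A non-deterministic tree automaton: all state sets in transitions are singletons. -/
def ATA.Nondet {α Q : Type} (A : ATA α Q) : Prop :=
  ∀ d ∈ A.delta, ∀ Pi ∈ d.2.2, ∃ q : Q, Pi = {q}

/-! ### Ordered tree-pushdown systems -/

/-- A rewrite rule of an AOTPS: `p, l → tgt, rhs` where the left-hand side `l` is
`a(args)`, and `look = some k` designates the lookahead subtree (deep rule). -/
structure ARule (α ν Q : Type) where
  p : Q
  a : α
  args : List (TTree (α ⊕ ν))
  look : Option ℕ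
  tgt : Set Q
  rhs : TTree (α ⊕ ν)

/-- The left-hand side of a rule as a term. -/
def ARule.lhs {α ν Q : Type} (ru : ARule α ν Q) : TTree (α ⊕ ν) :=
  .node (.inl ru.a) ru.args

/-- A term that is `r`-ground or a variable. -/
def GroundOrVar {α ν : Type} (r u : TTree (α ⊕ ν)) : Prop :=
  RGround r u ∨ IsVarTerm u

/-- Well-formedness of an AOTPS rule: the left-hand side is linear, all variables of
the right-hand side occur in the left-hand side, the trees are well ranked, and the
left-hand side is shallow or deep, subject to the ordering condition. -/
structure ARule.WF {α ν Q : Type} (sd : SymData α) (ordv : ν → ℕ)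
    (ru : ARule α ν Q) : Prop where
  linear : Linear ru.lhs
  varsSub : ∀ x : ν, OccursIn x ru.rhs → OccursIn x ru.lhs
  lhsWF : WFT (termRank sd) ru.lhs
  rhsWF : WFT (termRank sd) ru.rhs
  shape :
    match ru.look with
    | none => ∀ u ∈ ru.args, GroundOrVar ru.rhs u
    | some k => k < ru.args.length ∧
        ∃ (b : α) (vs : List (TTree (α ⊕ ν))),
          ru.args.getD k ru.rhs = .node (.inl b) vs ∧
          (∀ v ∈ vs, GroundOrVar ru.rhs v) ∧
          (∀ i, i < ru.args.length → i ≠ k → GroundOrVar ru.rhs (ru.args.getD i ru.rhs)) ∧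
          (∀ i, i < ru.args.length → i ≠ k →
            termOrd sd ordv (ru.args.getD i ru.rhs) ≤ sd.ord b →
            RGround ru.rhs (ru.args.getD i ru.rhs))

/-- An alternating ordered tree-pushdown system (AOTPS). -/
structure AOTPS (α ν Q : Type) where
  n : ℕ
  sd : SymData α
  ordv : ν → ℕ
  ctrl : Set Q
  rules : Set (ARule α ν Q)

/-- Well-formedness of an AOTPS of order `n`. -/
structure AOTPS.WF {α ν Q : Type} (S : AOTPS α ν Q) : Prop where
  nPos : 0 < S.n
  ordBound : ∀ a : α, S.sd.ord a ≤ S.n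
  rulesWF : ∀ ru ∈ S.rules, ru.p ∈ S.ctrl ∧ ru.tgt ⊆ S.ctrl ∧ ru.WF S.sd S.ordv

/-- The alternating transition relation induced by an AOTPS on configurations
`(p, t)` by root rewriting. -/
def AOTPS.trans {α ν Q : Type} (S : AOTPS α ν Q)
    (c : Q × TTree α) (D : Set (Q × TTree α)) : Prop :=
  ∃ ru ∈ S.rules, ∃ σ : ν → TTree α,
    (∀ x : ν, OccursIn x ru.lhs → S.sd.ord (σ x).root = S.ordv x) ∧
    c = (ru.p, substG σ ru.lhs) ∧
    D = (fun q => (q, substG σ ru.rhs)) '' ru.tgt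

/-- A flat rule: every subtree of the left-hand side (and of the lookahead subtree)
is just a variable. -/
def ARule.Flat {α ν Q : Type} (ru : ARule α ν Q) : Prop :=
  match ru.look with
  | none => ∀ u ∈ ru.args, IsVarTerm u
  | some k =>
      (∀ i, i < ru.args.length → i ≠ k → IsVarTerm (ru.args.getD i ru.rhs)) ∧
      ∃ (b : α) (vs : List (TTree (α ⊕ ν))),
        ru.args.getD k ru.rhs = .node (.inl b) vs ∧ ∀ v ∈ vs, IsVarTerm v

/-- A flat AOTPS: all rules are flat. -/
def AOTPS.Flat {α ν Q : Type} (S : AOTPS α ν Q) : Prop :=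
  ∀ ru ∈ S.rules, ru.Flat

/-- A non-deterministic AOTPS: every rule's target set of control locations is a
singleton. -/
def AOTPS.Nondet {α ν Q : Type} (S : AOTPS α ν Q) : Prop :=
  ∀ ru ∈ S.rules, ∃ q : Q, ru.tgt = {q}

/-- A shallow AOTPS: no deep rules. -/
def AOTPS.Shallow {α ν Q : Type} (S : AOTPS α ν Q) : Prop :=
  ∀ ru ∈ S.rules, ru.look = none

/-- A linear AOTPS: right-hand sides of rules are linear. -/
def AOTPS.LinearSys {α ν Q : Type} (S : AOTPS α ν Q) : Prop :=
  ∀ ru ∈ S.rules, Linear ru.rhs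

end OTPS
namespace OTPS

/-! ### The saturation construction -/

/-- States of the saturated automaton: original states, states `p^v` for terms `v`,
and states `(g, P_{k+1}, …, P_m)` for deep rules `g` (the sets `P_j` are represented
by lists of states). -/
inductive SatQ (α ν Q : Type) : Type
  | base : Q → SatQ α ν Q
  | pv : TTree (α ⊕ ν) → SatQ α ν Q
  | tup : ARule α ν Q → List (List (SatQ α ν Q)) → SatQ α ν Q

/-- Transitions of automata over the saturated state space. -/
abbrev STrans (α ν Q : Type) : Type :=
  SatQ α ν Q × α × List (Set (SatQ α ν Q))

/-- The order of a saturated state. -/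
def SatQ.ord {α ν Q : Type} (sd : SymData α) (ordv : ν → ℕ) (ordQ : Q → ℕ) :
    SatQ α ν Q → ℕ
  | .base q => ordQ q
  | .pv v => termOrd sd ordv v
  | .tup ru _ =>
      match ru.look with
      | some k => termOrd sd ordv (ru.args.getD k ru.rhs)
      | none => 0

/-- The transitions `Δ₀` making `L(p^v)` the set of ground instances of `v`:
a variable of order `k` is treated as a leaf accepted by every state of order `k`
(here: by transitions with empty state sets, from every symbol of order `k`). -/
def delta0 {α ν Q : Type} (S : AOTPS α ν Q) : Set (STrans α ν Q) :=
  { d | (∃ (a : α) (vs : List (TTree (α ⊕ ν))),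
          d = (SatQ.pv (.node (.inl a) vs), a,
               vs.map (fun v => ({SatQ.pv v} : Set (SatQ α ν Q))))) ∨
        (∃ (x : ν) (a : α), S.sd.ord a = S.ordv x ∧
          d = (SatQ.pv (.node (.inr x) []), a,
               List.replicate (S.sd.rank a) (∅ : Set (SatQ α ν Q)))) }

/-- Lifting a transition of the original automaton to the saturated state space. -/
def liftTrans {α ν Q : Type} (d : Q × α × List (Set Q)) : STrans α ν Q :=
  (SatQ.base d.1, d.2.1, d.2.2.map (fun P => SatQ.base '' P))

/-- The initial transitions `Δ ∪ Δ₀` of the saturation procedure. -/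
def baseDelta {α ν Q : Type} (S : AOTPS α ν Q) (A : ATA α Q) : Set (STrans α ν Q) :=
  (liftTrans '' A.delta) ∪ delta0 S

/-- Extended transition relation for a set of states:
`P →^a P₁ ⋯ P_m` iff every `p ∈ P` has a transition `p →^a P₁^p ⋯ P_m^p`
and `P_j = ⋃_{p ∈ P} P_j^p`. -/
def ExtTrans {α σs : Type} (D : Set (σs × α × List (Set σs)))
    (P : Set σs) (a : α) (Ps : List (Set σs)) : Prop :=
  ∃ f : σs → List (Set σs),
    (∀ p ∈ P, (p, a, f p) ∈ D ∧ (f p).length = Ps.length) ∧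
    ∀ j, j < Ps.length → Ps.getD j ∅ = ⋃ p ∈ P, (f p).getD j ∅

/-- Run trees of an automaton with transition set `D` on terms possibly containing
variables: a variable of order `k` is accepted by every state of order `k`. -/
inductive IsRun {α ν σs : Type} (ords : σs → ℕ) (ordv : ν → ℕ)
    (D : Set (σs × α × List (Set σs))) :
    TTree (α ⊕ ν) → TTree (Set σs) → Prop
  | sym {a : α} {ts : List (TTree (α ⊕ ν))} {P : Set σs} {ss : List (TTree (Set σs))} :
      ss.length = ts.length →
      ExtTrans D P a (ss.map TTree.root) →
      (∀ (i : ℕ) (h1 : i < ts.length) (h2 : i < ss.length),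
        IsRun ords ordv D (ts.get ⟨i, h1⟩) (ss.get ⟨i, h2⟩)) →
      IsRun ords ordv D (.node (.inl a) ts) (.node P ss)
  | var {x : ν} {ts : List (TTree (α ⊕ ν))} {P : Set σs} :
      (∀ q ∈ P, ords q = ordv x) →
      IsRun ords ordv D (.node (.inr x) ts) (.node P [])

/-- `LabelAt r rt x P`: at some node of `r` labelled by the variable `x`,
the run tree `rt` carries the state set `P`. -/
inductive LabelAt {α ν σs : Type} :
    TTree (α ⊕ ν) → TTree (Set σs) → ν → Set σs → Prop
  | here {x : ν} {ts : List (TTree (α ⊕ ν))} {P : Set σs} {ss : List (TTree (Set σs))} :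
      LabelAt (.node (.inr x) ts) (.node P ss) x P
  | child {c : α ⊕ ν} {ts : List (TTree (α ⊕ ν))} {P0 : Set σs}
      {ss : List (TTree (Set σs))} {x : ν} {P : Set σs} {i : ℕ}
      (h1 : i < ts.length) (h2 : i < ss.length) :
      LabelAt (ts.get ⟨i, h1⟩) (ss.get ⟨i, h2⟩) x P →
      LabelAt (.node c ts) (.node P0 ss) x P

/-- `⋃ rt(r⁻¹(x))`: the union of the run-tree labels at the `x`-labelled nodes of `r`. -/
def varStates {α ν σs : Type} (r : TTree (α ⊕ ν)) (rt : TTree (Set σs)) (x : ν) :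
    Set σs :=
  {q | ∃ P, LabelAt r rt x P ∧ q ∈ P}

/-- The state set attached by the saturation procedure to a subtree `u` of a
left-hand side, given the right-hand side `rhs` and a run tree `rt` on `rhs`:
`{p^u}` if `u` is not a variable; `⋃ rt(rhs⁻¹(x))` if `u` is a variable `x`
occurring in `rhs`; `{p^x}` if `u` is a variable `x` not occurring in `rhs`. -/
inductive ArgSetAt {α ν Q : Type} (rhs : TTree (α ⊕ ν))
    (rt : TTree (Set (SatQ α ν Q))) :
    TTree (α ⊕ ν) → Set (SatQ α ν Q) → Prop
  | ground {u : TTree (α ⊕ ν)} : ¬ IsVarTerm u → ArgSetAt rhs rt u {SatQ.pv u}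
  | varIn {x : ν} : OccursIn x rhs →
      ArgSetAt rhs rt (.node (.inr x) []) (varStates rhs rt x)
  | varOut {x : ν} : ¬ OccursIn x rhs →
      ArgSetAt rhs rt (.node (.inr x) []) {SatQ.pv (.node (.inr x) [])}

/-- One saturation step: the transitions added, given the current transition set `D`:
for every rule `g = (p, l → S', r)` with `l = a(u₁,…,u_m)` and every run tree of the
current automaton from `S'` on `r`, a transition `p →^a P₁ ⋯ P_m` is added; for a deep
rule, `P_k = {(g, P_{k+1},…,P_m)}` and additionally a transition
`(g, P_{k+1},…,P_m) →^b S₁ ⋯ S_{m'}` is added. -/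
def newTrans {α ν Q : Type} (S : AOTPS α ν Q) (ordQ : Q → ℕ)
    (D : Set (STrans α ν Q)) : Set (STrans α ν Q) :=
  { d | ∃ ru ∈ S.rules, ∃ rt : TTree (Set (SatQ α ν Q)),
      IsRun (SatQ.ord S.sd S.ordv ordQ) S.ordv D ru.rhs rt ∧
      rt.root = SatQ.base '' ru.tgt ∧
      ∃ Ps : List (Set (SatQ α ν Q)),
        Ps.length = ru.args.length ∧
        (∀ i, i < ru.args.length →
          ArgSetAt ru.rhs rt (ru.args.getD i ru.rhs) (Ps.getD i ∅)) ∧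
        ((ru.look = none ∧ d = (SatQ.base ru.p, ru.a, Ps)) ∨
         (∃ k, ru.look = some k ∧ k < ru.args.length ∧
           ∃ (b : α) (vs : List (TTree (α ⊕ ν))),
             ru.args.getD k ru.rhs = .node (.inl b) vs ∧
             ∃ Ls : List (List (SatQ α ν Q)),
               Ls.length = ru.args.length - (k + 1) ∧
               (∀ j, j < Ls.length →
                 {q | q ∈ Ls.getD j []} = Ps.getD (k + 1 + j) ∅) ∧
               (d = (SatQ.base ru.p, ru.a, Ps.set k {SatQ.tup ru Ls}) ∨
                ∃ Ss : List (Set (SatQ α ν Q)),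
                  Ss.length = vs.length ∧
                  (∀ j, j < vs.length →
                    ArgSetAt ru.rhs rt (vs.getD j ru.rhs) (Ss.getD j ∅)) ∧
                  d = (SatQ.tup ru Ls, b, Ss)))) }

/-- Iteration of the saturation procedure. -/
def satIter {α ν Q : Type} (S : AOTPS α ν Q) (A : ATA α Q) (ordQ : Q → ℕ) :
    ℕ → Set (STrans α ν Q)
  | 0 => baseDelta S A
  | k + 1 => satIter S A ordQ k ∪ newTrans S ordQ (satIter S A ordQ k)

/-- The saturated automaton `B`. -/
def satATA {α ν Q : Type} (S : AOTPS α ν Q) (A : ATA α Q) (ordQ : Q → ℕ) :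
    ATA α (SatQ α ν Q) :=
  ⟨⋃ k, satIter S A ordQ k⟩

/-- The language of configurations `L(B, P)` of the saturated automaton. -/
def satLang {α ν Q : Type} (S : AOTPS α ν Q) (A : ATA α Q) (ordQ : Q → ℕ) :
    Set (Q × TTree α) :=
  { c | c.1 ∈ S.ctrl ∧ (satATA S A ordQ).Accepts (SatQ.base c.1) c.2 }

end OTPS
namespace OTPS

/-- The semantics `⟦p⟧` of states of the saturated automaton:
`⟦base q⟧ = {t | (q,t) ∈ pre*(L(A,P))}` for control locations `q ∈ P`,
`⟦base q⟧ = L_A(q)` for `q ∈ Q ∖ P`, `⟦p^v⟧ = L_B(p^v)`, and for a tuple state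
`((q, l → S', r), P_{k+1},…,P_m)` with `l = a(u₁,…,u_m)` and lookahead subtree `u_k`,
`⟦p⟧` is the set of trees `t_k ∈ ⟦p^{u_k}⟧` such that for all `t₁ ∈ ⟦p^{u₁}⟧, …,
t_{k−1} ∈ ⟦p^{u_{k−1}}⟧` and all `t_{k+1} ∈ ⟦P_{k+1}⟧, …, t_m ∈ ⟦P_m⟧` we have
`(q, a(t₁,…,t_m)) ∈ pre*(L(A,P))`. -/
def sem {α ν Q : Type} (S : AOTPS α ν Q) (A : ATA α Q) (ordQ : Q → ℕ) :
    SatQ α ν Q → Set (TTree α)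
  | .base q =>
      {t | (q ∈ S.ctrl ∧ (q, t) ∈ preStar S.trans (A.lang S.ctrl)) ∨
           (q ∉ S.ctrl ∧ A.Accepts q t)}
  | .pv v => {t | (satATA S A ordQ).Accepts (.pv v) t}
  | .tup ru Ls =>
      {t | ∃ k, ru.look = some k ∧
        (satATA S A ordQ).Accepts (.pv (ru.args.getD k ru.rhs)) t ∧
        ∀ ts : List (TTree α), ts.length = ru.args.length →
          ts.getD k t = t →
          (∀ i, i < k →
            (satATA S A ordQ).Accepts (.pv (ru.args.getD i ru.rhs)) (ts.getD i t)) →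
          (∀ j, j < Ls.length → ∀ q ∈ Ls.getD j [],
            ts.getD (k + 1 + j) t ∈ sem S A ordQ q) →
          (ru.p, TTree.node ru.a ts) ∈ preStar S.trans (A.lang S.ctrl)}
termination_by s => sizeOf s
decreasing_by
  rename_i hlen hget hacc hj hq
  have h0 : Ls.getD j [] = Ls.get ⟨j, hj⟩ := by
    simp [List.getD_eq_getElem?_getD, List.getElem?_eq_getElem, hj]
  rw [h0] at hq
  have h1 : sizeOf q < sizeOf (Ls.get ⟨j, hj⟩) :=
    List.sizeOf_lt_of_mem hq
  have h2 : sizeOf (Ls.get ⟨j, hj⟩) < sizeOf Ls :=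
    List.sizeOf_lt_of_mem (Ls.get_mem _)
  simp only [SatQ.tup.sizeOf_spec]
  omega

/-- ⟦·⟧ on a set of states: the intersection of the members' semantics. -/
def semSet {α ν Q : Type} (S : AOTPS α ν Q) (A : ATA α Q) (ordQ : Q → ℕ)
    (P : Set (SatQ α ν Q)) : Set (TTree α) :=
  ⋂ q ∈ P, sem S A ordQ q

/-- A transition `p →^a P₁ ⋯ P_m` is sound iff for all `t₁ ∈ ⟦P₁⟧, …, t_m ∈ ⟦P_m⟧`,
`a(t₁,…,t_m) ∈ ⟦p⟧`. -/
def SoundT {α ν Q : Type} (S : AOTPS α ν Q) (A : ATA α Q) (ordQ : Q → ℕ)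
    (d : STrans α ν Q) : Prop :=
  ∀ ts : List (TTree α), ts.length = d.2.2.length →
    (∀ (i : ℕ) (h1 : i < ts.length) (h2 : i < d.2.2.length),
      ∀ q ∈ d.2.2.get ⟨i, h2⟩, ts.get ⟨i, h1⟩ ∈ sem S A ordQ q) →
    TTree.node d.2.1 ts ∈ sem S A ordQ d.1

end OTPS
namespace OTPS

/-- If every transition of a tree automaton over the state set `Q'`
of the saturated automaton is sound w.r.t. the semantics `⟦·⟧`, then `L(p) ⊆ ⟦p⟧`
for every state `p`. -/
theorem lang_subset_sem_of_sound {α ν Q : Type} (S : AOTPS α ν Q) (A : ATA α Q)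
    (ordQ : Q → ℕ) (hS : S.WF)
    (hOrdered : ∀ d ∈ A.delta, ordQ d.1 = S.sd.ord d.2.1)
    (hNoBack : ∀ d ∈ A.delta, ∀ Pi ∈ d.2.2, ∀ q ∈ Pi, q ∉ S.ctrl)
    (D : Set (STrans α ν Q)) (hsound : ∀ d ∈ D, SoundT S A ordQ d) :
    ∀ (p : SatQ α ν Q) (t : TTree α),
      (ATA.mk D).Accepts p t → t ∈ sem S A ordQ p := by
  intro p t h
  induction h with
  | @node p a ts Ps hd hlen hsub ih =>
    exact hsound _ hd ts hlen.symm (fun i h1 h2 q hq => ih i h1 h2 q hq)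

end OTPS
end

section
/- All transitions of the initial automaton, i.e., all transitions in Δ ∪ Δ₀, are sound with respect to the semantics ⟦·⟧. -/
namespace OTPS

/-- A configuration in the target set is in `preStar`. -/
lemma mem_preStar_of_mem {C : Type} {tr : C → Set C → Prop} {T : Set C} {c : C}
    (h : c ∈ T) : c ∈ preStar tr T := by
  refine Relation.ReflTransGen.single ?_
  intro c' hc'
  rcases hc' with rfl
  exact Or.inl h

lemma sem_base {α ν Q : Type} (S : AOTPS α ν Q) (A : ATA α Q) (ordQ : Q → ℕ)
    (q : Q) :
    sem S A ordQ (.base q) =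
      {t | (q ∈ S.ctrl ∧ (q, t) ∈ preStar S.trans (A.lang S.ctrl)) ∨
           (q ∉ S.ctrl ∧ A.Accepts q t)} := by
  rw [sem]

lemma sem_pv {α ν Q : Type} (S : AOTPS α ν Q) (A : ATA α Q) (ordQ : Q → ℕ)
    (v : TTree (α ⊕ ν)) :
    sem S A ordQ (.pv v) = {t | (satATA S A ordQ).Accepts (.pv v) t} := by
  rw [sem]

lemma delta0_sub {α ν Q : Type} (S : AOTPS α ν Q) (A : ATA α Q) (ordQ : Q → ℕ)
    {d : STrans α ν Q} (h : d ∈ delta0 S) : d ∈ (satATA S A ordQ).delta := by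
  exact Set.mem_iUnion.2 ⟨0, Or.inr h⟩

/-- All transitions of the initial automaton, i.e. all transitions
in `Δ ∪ Δ₀`, are sound w.r.t. the semantics `⟦·⟧`. -/
theorem baseDelta_sound {α ν Q : Type} (S : AOTPS α ν Q) (A : ATA α Q)
    (ordQ : Q → ℕ) (hS : S.WF)
    (hOrdered : ∀ d ∈ A.delta, ordQ d.1 = S.sd.ord d.2.1)
    (hNoBack : ∀ d ∈ A.delta, ∀ Pi ∈ d.2.2, ∀ q ∈ Pi, q ∉ S.ctrl) :
    ∀ d ∈ baseDelta S A, SoundT S A ordQ d := by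
  intro d hd ts hlen hmem
  rcases hd with ⟨d', hd', rfl⟩ | hd0
  · -- lifted transition from A
    obtain ⟨q, a, Ps⟩ := d'
    simp only [liftTrans] at hlen hmem ⊢
    have hlenPs : ts.length = Ps.length := by simpa using hlen
    have hacc : A.Accepts q (.node a ts) := by
      refine ATA.Accepts.node hd' (by simpa using hlenPs.symm) ?_
      intro i h1 h2 p hp
      have h2' : i < (Ps.map (fun P => (SatQ.base '' P : Set (SatQ α ν Q)))).length := by simpa using h2
      have hts := hmem i h1 h2' (SatQ.base p) (by
        simp only [List.get_eq_getElem, List.getElem_map]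
        exact ⟨p, hp, rfl⟩)
      have hp' : p ∉ S.ctrl := hNoBack _ hd' _ (Ps.get_mem ⟨i, h2⟩) p hp
      rw [sem_base] at hts
      rcases hts with ⟨h, _⟩ | ⟨_, h⟩
      · exact absurd h hp'
      · exact h
    rw [sem_base]
    by_cases hq : q ∈ S.ctrl
    · exact Or.inl ⟨hq, mem_preStar_of_mem ⟨hq, hacc⟩⟩
    · exact Or.inr ⟨hq, hacc⟩
  · rcases hd0 with ⟨a, vs, rfl⟩ | ⟨x, a, hx, rfl⟩
    · -- pv (node (inl a) vs)
      simp only at hlen hmem ⊢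
      rw [sem_pv]
      refine ATA.Accepts.node (delta0_sub S A ordQ (Or.inl ⟨a, vs, rfl⟩)) ?_ ?_
      · simpa using hlen.symm
      · intro i h1 h2 p hp
        have hts := hmem i h1 h2 p hp
        simp only [List.get_eq_getElem, List.getElem_map, Set.mem_singleton_iff] at hp
        subst hp
        rw [sem_pv] at hts
        exact hts
    · -- pv (node (inr x) [])
      simp only at hlen hmem ⊢
      rw [sem_pv]
      refine ATA.Accepts.node (delta0_sub S A ordQ (Or.inr ⟨x, a, hx, rfl⟩)) ?_ ?_
      · simpa using hlen.symm
      · intro i h1 h2 p hp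
        simp only [List.get_eq_getElem, List.getElem_replicate] at hp
        exact absurd hp (Set.notMem_empty p)

end OTPS
end

section
/- Size of the saturated automaton: let m > 1 be the maximal rank of a symbol in Σ and let the state sets satisfy |Q'_{n+1}| ≤ |Q| + |R|, |Q'_n| ≤ |Q'_{n+1}| + |R|, and |Q'_k| ≤ |Q'_{k+1}| + |R|·2^{(m−1)·|Q'_{k+1}|} for 1 ≤ k ≤ n−1. Then the total number of states satisfies |Q'| ≤ exp_{n−1}(O((m−1)·(|Q| + |R|))) and the number of transitions satisfies |Δ'| ≤ exp_n(O((m−1)·(|Q| + |R|))), where exp_0(x) = x and exp_{i+1}(x) = 2^{exp_i(x)}. -/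
namespace OTPS

/-- The tower function: `expIter 0 x = x` and `expIter (i+1) x = 2 ^ expIter i x`. -/
def expIter : ℕ → ℕ → ℕ
  | 0, x => x
  | i + 1, x => 2 ^ expIter i x

lemma le_two_pow_pred {n : ℕ} (h : 1 ≤ n) : n ≤ 2 ^ (n - 1) := by
  have := Nat.lt_two_pow_self (n := n - 1)
  omega

lemma self_le_expIter (j x : ℕ) : x ≤ expIter j x := by
  induction j with
  | zero => exact le_refl _
  | succ j ih =>
      calc x ≤ expIter j x := ih
        _ ≤ 2 ^ expIter j x := (Nat.lt_two_pow_self).le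
        _ = expIter (j + 1) x := rfl

/-- Size of the saturated automaton.  There is an absolute constant
`C` such that: if `m > 1` is the maximal rank of a symbol, and the sizes
`q k = |Q'_k|` of the state sets of the saturated automaton satisfy
`|Q'_{n+1}| ≤ |Q| + |R|`, `|Q'_n| ≤ |Q'_{n+1}| + |R|`, and
`|Q'_k| ≤ |Q'_{k+1}| + |R|·2^((m−1)·|Q'_{k+1}|)` for `1 ≤ k ≤ n−1`, then the total
number of states `|Q'| = |Q'_1|` satisfies
`|Q'| ≤ expIter (n−1) (C·(m−1)·(|Q|+|R|))`, and the number of transitions `|Δ'|`,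
being at most one exponential larger than the number of states, satisfies
`|Δ'| ≤ expIter n (C·(m−1)·(|Q|+|R|))`. -/
theorem saturation_size :
    ∃ C : ℕ, 0 < C ∧
      ∀ (n m Qc Rc : ℕ) (q : ℕ → ℕ),
        1 < m → 1 ≤ n →
        q (n + 1) ≤ Qc + Rc →
        q n ≤ q (n + 1) + Rc →
        (∀ k, 1 ≤ k → k ≤ n - 1 → q k ≤ q (k + 1) + Rc * 2 ^ ((m - 1) * q (k + 1))) →
        q 1 ≤ expIter (n - 1) (C * ((m - 1) * (Qc + Rc))) ∧
        ∀ d : ℕ, d ≤ (Qc + Rc + q 1) * 2 ^ (m * q 1) →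
          d ≤ expIter n (C * ((m - 1) * (Qc + Rc))) := by
  refine ⟨9, by norm_num, ?_⟩
  intro n m Qc Rc q hm hn h1 h2 h3
  set A := Qc + Rc with hA
  by_cases hA0 : A = 0
  · -- degenerate case
    have hQc : Qc = 0 := by omega
    have hRc : Rc = 0 := by omega
    have hq : ∀ j, j ≤ n → q (n + 1 - j) = 0 := by
      intro j
      induction j with
      | zero => intro _; simp only [Nat.sub_zero]; omega
      | succ j ih =>
          intro hj
          have hj' : j ≤ n := by omega
          have h0 := ih hj'
          rcases Nat.eq_or_lt_of_le hj with h | h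
          · -- n + 1 - (j+1) could be anything; use cases on j = 0 vs not via k
            by_cases hj0 : j = 0
            · subst hj0
              have : n + 1 - 1 = n := by omega
              rw [this]
              simp only [Nat.sub_zero] at h0
              omega
            · have hk1 : 1 ≤ n + 1 - (j + 1) := by omega
              have hk2 : n + 1 - (j + 1) ≤ n - 1 := by omega
              have := h3 _ hk1 hk2
              have he : n + 1 - (j + 1) + 1 = n + 1 - j := by omega
              rw [he] at this
              rw [h0, hRc] at this
              omega
          · by_cases hj0 : j = 0
            · subst hj0
              have : n + 1 - 1 = n := by omega
              rw [this]
              simp only [Nat.sub_zero] at h0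
              omega
            · have hk1 : 1 ≤ n + 1 - (j + 1) := by omega
              have hk2 : n + 1 - (j + 1) ≤ n - 1 := by omega
              have := h3 _ hk1 hk2
              have he : n + 1 - (j + 1) + 1 = n + 1 - j := by omega
              rw [he] at this
              rw [h0, hRc] at this
              omega
    have hq1 : q 1 = 0 := by
      have := hq n (le_refl n)
      simpa using this
    constructor
    · rw [hq1]; exact Nat.zero_le _
    · intro d hd
      rw [hq1] at hd
      rw [hA0] at hd
      simp at hd
      rw [hd]
      exact Nat.zero_le _
  · -- main case: A ≥ 1
    have hA1 : 1 ≤ A := by omega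
    set B := (m - 1) * A with hB
    have hm1 : 1 ≤ m - 1 := by omega
    have hB1 : 1 ≤ B := Nat.one_le_iff_ne_zero.mpr (by positivity)
    have hRcB : (m - 1) * Rc ≤ B := Nat.mul_le_mul_left _ (by omega)
    -- key invariant
    have key : ∀ j, j ≤ n - 1 → 3 * ((m - 1) * q (n - j)) + 3 * B ≤ expIter j (9 * B) := by
      intro j
      induction j with
      | zero =>
          intro _
          simp only [Nat.sub_zero, expIter]
          have hqn : q n ≤ 2 * A := by omega
          have : (m - 1) * q n ≤ (m - 1) * (2 * A) := Nat.mul_le_mul_left _ hqn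
          have h2B : (m - 1) * (2 * A) = 2 * B := by ring
          omega
      | succ j ih =>
          intro hj
          have hj' : j ≤ n - 1 := by omega
          set E := expIter j (9 * B) with hE
          have ihE := ih hj'
          have hE1 : 1 ≤ E := le_trans (by omega) (self_le_expIter j (9 * B))
          set k := n - (j + 1) with hk
          have hk1 : 1 ≤ k := by omega
          have hk2 : k ≤ n - 1 := by omega
          have hkk : k + 1 = n - j := by omega
          have hstep := h3 k hk1 hk2
          rw [hkk] at hstep
          set e := (m - 1) * q (n - j) with he
          have hie : 3 * e + 3 * B ≤ E := ihE
          -- bound q k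
          have hb1 : (m - 1) * q k ≤ (m - 1) * (q (n - j) + Rc * 2 ^ e) :=
            Nat.mul_le_mul_left _ hstep
          have hb2 : (m - 1) * (q (n - j) + Rc * 2 ^ e) = e + ((m - 1) * Rc) * 2 ^ e := by
            rw [he]; ring
          have hb3 : ((m - 1) * Rc) * 2 ^ e ≤ B * 2 ^ e := Nat.mul_le_mul_right _ hRcB
          have hexp1 : 3 * B ≤ 2 ^ (3 * B - 1) := le_two_pow_pred (by omega)
          have hexp2 : (3 * B) * 2 ^ e ≤ 2 ^ (3 * B - 1) * 2 ^ e :=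
            Nat.mul_le_mul_right _ hexp1
          have hexp3 : 2 ^ (3 * B - 1) * 2 ^ e = 2 ^ (3 * B - 1 + e) := by
            rw [← pow_add]
          have hexp4 : 3 * B - 1 + e ≤ E - 1 := by omega
          have hexp5 : (2:ℕ) ^ (3 * B - 1 + e) ≤ 2 ^ (E - 1) :=
            Nat.pow_le_pow_right (by norm_num) hexp4
          have hE2 : E ≤ 2 ^ (E - 1) := le_two_pow_pred hE1
          have hsplit : 2 ^ (E - 1) + 2 ^ (E - 1) = 2 ^ E := by
            rw [← two_mul, ← pow_succ', Nat.sub_add_cancel hE1]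
          have hgoal : expIter (j + 1) (9 * B) = 2 ^ E := rfl
          rw [hgoal]
          calc 3 * ((m - 1) * q k) + 3 * B
              ≤ 3 * (e + ((m - 1) * Rc) * 2 ^ e) + 3 * B := by
                have := le_trans hb1 (le_of_eq hb2)
                omega
            _ ≤ 3 * (e + B * 2 ^ e) + 3 * B := by omega
            _ = (3 * e + 3 * B) + (3 * B) * 2 ^ e := by ring
            _ ≤ E + 2 ^ (3 * B - 1 + e) := by
                have := le_trans hexp2 (le_of_eq hexp3)
                omega
            _ ≤ 2 ^ (E - 1) + 2 ^ (E - 1) := Nat.add_le_add hE2 hexp5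
            _ = 2 ^ E := hsplit
    have hkey1 := key (n - 1) (le_refl _)
    have hn1 : n - (n - 1) = 1 := by omega
    rw [hn1] at hkey1
    set F := expIter (n - 1) (9 * B) with hF
    have hq1F : q 1 ≤ F := by
      have : q 1 ≤ (m - 1) * q 1 := Nat.le_mul_of_pos_left _ (by omega)
      omega
    constructor
    · exact hq1F
    · intro d hd
      have hAq : A + q 1 < 2 ^ (A + q 1) := Nat.lt_two_pow_self
      have hd2 : d ≤ 2 ^ (A + q 1) * 2 ^ (m * q 1) := by
        calc d ≤ (A + q 1) * 2 ^ (m * q 1) := hd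
          _ ≤ 2 ^ (A + q 1) * 2 ^ (m * q 1) := Nat.mul_le_mul_right _ hAq.le
      rw [← pow_add] at hd2
      have hmq : (m + 1) * q 1 ≤ 3 * ((m - 1) * q 1) := by
        have h1 : m + 1 ≤ 3 * (m - 1) := by omega
        calc (m + 1) * q 1 ≤ (3 * (m - 1)) * q 1 := Nat.mul_le_mul_right _ h1
          _ = 3 * ((m - 1) * q 1) := by ring
      have hAB : A ≤ B := Nat.le_mul_of_pos_left _ (by omega)
      have hsum : A + q 1 + m * q 1 = A + (m + 1) * q 1 := by ring
      have hFb : A + q 1 + m * q 1 ≤ F := by omega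
      have hlast : (2:ℕ) ^ (A + q 1 + m * q 1) ≤ 2 ^ F :=
        Nat.pow_le_pow_right (by norm_num) hFb
      have hEn : expIter n (9 * B) = 2 ^ F := by
        have : n = (n - 1) + 1 := by omega
        rw [this]; rfl
      rw [hEn]
      exact le_trans hd2 hlast

end OTPS
end

section
/- Correctness of the encoding of ordered multi-pushdown systems into AOTPSs: for the AOTPS S constructed from an ordered multi-pushdown system O = (n, Γ, Q, Δ), one has (p, w₁,…,w_n) →*_O P × {(w'₁,…,w'_n)} if and only if (p, enc(w₁,…,w_n)) →*_S P × {enc(w'₁,…,w'_n)}; hence the encoding preserves reachability properties. -/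
namespace OTPS

/-! ### Ordered multi-pushdown systems -/

/-- Operations of a multi-pushdown system: push or pop a symbol on the `k`-th
pushdown (pushdowns are indexed `1, …, n`). -/
inductive MPDOp (Γ : Type) : Type
  | push (k : ℕ) (a : Γ)
  | pop (k : ℕ) (a : Γ)

/-- An alternating ordered multi-pushdown system with `n` word pushdowns. -/
structure OMPDS (Γ Q : Type) where
  n : ℕ
  rules : Set (Q × MPDOp Γ × Set Q)

/-- Well-formedness: pushdown indices lie in `{1, …, n}`. -/
def OMPDS.WF {Γ Q : Type} (O : OMPDS Γ Q) : Prop :=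
  0 < O.n ∧ ∀ r ∈ O.rules,
    match r.2.1 with
    | .push k _ => 1 ≤ k ∧ k ≤ O.n
    | .pop k _ => 1 ≤ k ∧ k ≤ O.n

/-- The alternating transition relation of an ordered multi-pushdown system on
configurations `(p, w₁, …, w_n)`: pushes are unrestricted, while popping from the
`k`-th pushdown empties pushdowns `1, …, k−1`. -/
def OMPDS.trans {Γ Q : Type} (O : OMPDS Γ Q)
    (c : Q × List (List Γ)) (D : Set (Q × List (List Γ))) : Prop :=
  c.2.length = O.n ∧
  ∃ r ∈ O.rules, r.1 = c.1 ∧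
    ((∃ (k : ℕ) (a : Γ), r.2.1 = MPDOp.push k a ∧ 1 ≤ k ∧ k ≤ O.n ∧
        D = (fun q => (q, c.2.set (k - 1) (a :: c.2.getD (k - 1) []))) '' r.2.2) ∨
     (∃ (k : ℕ) (a : Γ) (w' : List Γ), r.2.1 = MPDOp.pop k a ∧ 1 ≤ k ∧ k ≤ O.n ∧
        c.2.getD (k - 1) [] = a :: w' ∧
        D = (fun q => (q, List.replicate (k - 1) ([] : List Γ) ++ w' :: c.2.drop k))
              '' r.2.2))

/-- A non-deterministic ordered multi-pushdown system. -/
def OMPDS.Nondet {Γ Q : Type} (O : OMPDS Γ Q) : Prop :=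
  ∀ r ∈ O.rules, ∃ q : Q, r.2.2 = {q}

end OTPS
namespace OTPS

/-! ### Encoding ordered multi-pushdown systems into AOTPSs -/

/-- The alphabet `Σ = (Γ⊥ × {1,…,n}) ∪ {•}`: a symbol `(a, i)` (with `a ∈ Γ` or
`a = ⊥`, represented by `none`) or the root symbol `•`. -/
abbrev MSym (Γ : Type) : Type := (Option Γ × ℕ) ⊕ Unit

/-- Ranks: `(a, i)` has rank `1` for `a ∈ Γ` and rank `0` for `⊥`; `•` has rank `n`.
Orders: `(a, i)` has order `i`; `•` has order `1`. -/
def msd (Γ : Type) (n : ℕ) : SymData (MSym Γ) where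
  rank := fun s => match s with
    | .inl (some _, _) => 1
    | .inl (none, _) => 0
    | .inr _ => n
  ord := fun s => match s with
    | .inl (_, i) => i
    | .inr _ => 1

/-- Terms over the alphabet `MSym Γ` with variables `ℕ` (`x_k` has order `k`). -/
def tvar {Γ : Type} (i : ℕ) : TTree (MSym Γ ⊕ ℕ) := .node (.inr i) []

def tsym {Γ : Type} (a : Option Γ) (k : ℕ) (ts : List (TTree (MSym Γ ⊕ ℕ))) :
    TTree (MSym Γ ⊕ ℕ) := .node (.inl (.inl (a, k))) ts

def tbullet {Γ : Type} (ts : List (TTree (MSym Γ ⊕ ℕ))) : TTree (MSym Γ ⊕ ℕ) :=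
  .node (.inl (.inr ())) ts

/-- The list of variables `x₁, …, x_n`. -/
def baseVars (Γ : Type) (n : ℕ) : List (TTree (MSym Γ ⊕ ℕ)) :=
  (List.range n).map (fun i => tvar (i + 1))

/-- The encoding of the `k`-th pushdown word as a linear tree of order `k`. -/
def encW {Γ : Type} (k : ℕ) : List Γ → TTree (MSym Γ)
  | [] => .node (.inl (none, k)) []
  | a :: w => .node (.inl (some a, k)) [encW k w]

/-- The encoding of a multi-pushdown `(w₁, …, w_n)` as the tree
`•(enc w₁, …, enc w_n)`. -/
def encMP {Γ : Type} (n : ℕ) (ws : List (List Γ)) : TTree (MSym Γ) :=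
  .node (.inr ()) ((List.range n).map (fun i => encW (i + 1) (ws.getD i [])))

/-- The shallow rule `p, •(x₁,…,x_n) → P, •(x₁,…,a^k(x_k),…,x_n)` encoding a push. -/
def pushRule {Γ Q : Type} (n : ℕ) (p : Q) (k : ℕ) (a : Γ) (P : Set Q) :
    ARule (MSym Γ) ℕ Q where
  p := p
  a := .inr ()
  args := baseVars Γ n
  look := none
  tgt := P
  rhs := tbullet ((baseVars Γ n).set (k - 1) (tsym (some a) k [tvar k]))

/-- The deep rule
`p, •(x₁,…,a^k(x_k),…,x_n) → P, •(⊥¹,…,⊥^{k−1},x_k,x_{k+1},…,x_n)` encoding a pop. -/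
def popRule {Γ Q : Type} (n : ℕ) (p : Q) (k : ℕ) (a : Γ) (P : Set Q) :
    ARule (MSym Γ) ℕ Q where
  p := p
  a := .inr ()
  args := (baseVars Γ n).set (k - 1) (tsym (some a) k [tvar k])
  look := some (k - 1)
  tgt := P
  rhs := tbullet ((List.range n).map
    (fun i => if i + 1 < k then tsym none (i + 1) [] else tvar (i + 1)))

/-- The AOTPS encoding an ordered multi-pushdown system. -/
def encodeMPDS {Γ Q : Type} (O : OMPDS Γ Q) : AOTPS (MSym Γ) ℕ Q where
  n := O.n
  sd := msd Γ O.n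
  ordv := id
  ctrl := Set.univ
  rules := {ru | ∃ r ∈ O.rules,
    (∃ (k : ℕ) (a : Γ), r.2.1 = MPDOp.push k a ∧ ru = pushRule O.n r.1 k a r.2.2) ∨
    (∃ (k : ℕ) (a : Γ), r.2.1 = MPDOp.pop k a ∧ ru = popRule O.n r.1 k a r.2.2)}

section Helpers
variable {Γ Q : Type}

lemma substG_inl {α ν : Type} (σ : ν → TTree α) (a : α) (ts : List (TTree (α ⊕ ν))) :
    substG σ (.node (.inl a) ts) = .node a (ts.map (substG σ)) := by
  rw [substG]; congr 1; conv_rhs => rw [← List.attach_map_subtype_val ts]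
  rw [List.map_map]; rfl

lemma substG_var {α ν : Type} (σ : ν → TTree α) (x : ν) (ts) :
    substG σ (.node (.inr x) ts) = σ x := by rw [substG]

lemma encW_ord (n k : ℕ) (w : List Γ) : (msd Γ n).ord (encW k w).root = k := by
  cases w <;> rfl

lemma encW_eq_cons {k : ℕ} {w : List Γ} {a : Γ} {t : TTree (MSym Γ)} :
    encW k w = TTree.node (Sum.inl (some a, k)) [t] ↔ ∃ w', w = a :: w' ∧ t = encW k w' := by
  cases w with
  | nil => simp [encW]
  | cons b w => simp [encW]; aesop

lemma node_inj {α : Type} {a b : α} {ts us : List (TTree α)}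
    (h : TTree.node a ts = TTree.node b us) : a = b ∧ ts = us := by
  injection h with h1 h2; exact ⟨h1, h2⟩

lemma getD_set_self {α : Type} (l : List α) {i : ℕ} (h : i < l.length) (v d : α) :
    (l.set i v).getD i d = v := by
  simp [List.getD_eq_getElem?_getD, List.getElem?_set, h]

lemma getD_set_ne {α : Type} (l : List α) {i j : ℕ} (h : i ≠ j) (v d : α) :
    (l.set i v).getD j d = l.getD j d := by
  simp [List.getD_eq_getElem?_getD, List.getElem?_set, h]

lemma substG_push_lhs (σ : ℕ → TTree (MSym Γ)) (n : ℕ) (p : Q) (k : ℕ) (a : Γ) (P : Set Q) :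
    substG σ (pushRule n p k a P).lhs
      = .node (.inr ()) ((List.range n).map (fun i => σ (i + 1))) := by
  show substG σ (.node (.inl (.inr ())) (baseVars Γ n)) = _
  rw [substG_inl]
  simp [baseVars, List.map_map, Function.comp, tvar, substG_var]

lemma substG_bullet_set (σ : ℕ → TTree (MSym Γ)) (n k : ℕ) (a : Γ) :
    substG σ (TTree.node (Sum.inl (Sum.inr ()))
        ((baseVars Γ n).set (k-1) (tsym (some a) k [tvar k])))
      = .node (.inr ()) (((List.range n).map (fun i => σ (i+1))).set (k-1)
          (.node (.inl (some a, k)) [σ k])) := by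
  rw [substG_inl, List.map_set]
  simp only [baseVars, List.map_map, tsym, tvar, substG_inl, List.map_cons,
    List.map_nil, substG_var]
  congr 2
  apply List.map_congr_left
  intro i _
  simp [Function.comp, substG_var]

lemma substG_push_rhs (σ : ℕ → TTree (MSym Γ)) (n : ℕ) (p : Q) (k : ℕ) (a : Γ) (P : Set Q) :
    substG σ (pushRule n p k a P).rhs
      = .node (.inr ()) (((List.range n).map (fun i => σ (i+1))).set (k-1)
          (.node (.inl (some a, k)) [σ k])) :=
  substG_bullet_set σ n k a

lemma substG_pop_lhs (σ : ℕ → TTree (MSym Γ)) (n : ℕ) (p : Q) (k : ℕ) (a : Γ) (P : Set Q) :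
    substG σ (popRule n p k a P).lhs
      = .node (.inr ()) (((List.range n).map (fun i => σ (i+1))).set (k-1)
          (.node (.inl (some a, k)) [σ k])) :=
  substG_bullet_set σ n k a

lemma substG_pop_rhs (σ : ℕ → TTree (MSym Γ)) (n : ℕ) (p : Q) (k : ℕ) (a : Γ) (P : Set Q) :
    substG σ (popRule n p k a P).rhs
      = .node (.inr ()) ((List.range n).map
          (fun i => if i + 1 < k then .node (.inl (none, i+1)) [] else σ (i+1))) := by
  show substG σ (tbullet _) = _
  rw [tbullet, substG_inl, List.map_map]
  congr 1
  apply List.map_congr_left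
  intro i _
  by_cases h : i + 1 < k <;>
    simp [h, tsym, tvar, substG_inl, substG_var, Function.comp]

lemma bullet_eq_encMP (n : ℕ) (σ : ℕ → TTree (MSym Γ)) (vs : List (List Γ))
    (hσ : ∀ i < n, σ (i+1) = encW (i+1) (vs.getD i [])) :
    TTree.node (Sum.inr ()) ((List.range n).map (fun i => σ (i+1))) = encMP n vs := by
  rw [encMP]; congr 1
  apply List.map_congr_left
  intro i hi
  exact hσ i (List.mem_range.mp hi)

lemma push_set_eq_encMP (n k : ℕ) (a : Γ) (hk1 : 1 ≤ k) (hkn : k ≤ n)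
    (σ : ℕ → TTree (MSym Γ)) (vs : List (List Γ)) (hlen : vs.length = n)
    (hσ : ∀ i < n, σ (i+1) = encW (i+1) (vs.getD i [])) :
    TTree.node (Sum.inr ()) (((List.range n).map (fun i => σ (i+1))).set (k-1)
        (.node (.inl (some a, k)) [σ k]))
      = encMP n (vs.set (k-1) (a :: vs.getD (k-1) [])) := by
  rw [encMP]; congr 1
  apply List.ext_getElem (by simp)
  intro i h1 h2
  simp only [List.getElem_set, List.getElem_map, List.getElem_range]
  have hin : i < n := by simpa using h2
  by_cases hik : k - 1 = i
  · subst hik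
    rw [if_pos rfl, getD_set_self vs (by omega)]
    have hk : k - 1 + 1 = k := by omega
    have := hσ (k-1) (by omega)
    rw [hk] at this ⊢
    rw [this, encW]
  · rw [if_neg hik, getD_set_ne vs hik, hσ i hin]

lemma pop_rhs_eq_encMP (n k : ℕ) (hk1 : 1 ≤ k) (hkn : k ≤ n)
    (σ : ℕ → TTree (MSym Γ)) (vs : List (List Γ)) (w' : List Γ) (hlen : vs.length = n)
    (hσk : σ k = encW k w')
    (hσ : ∀ i < n, i ≠ k - 1 → σ (i+1) = encW (i+1) (vs.getD i [])) :
    TTree.node (Sum.inr ()) ((List.range n).map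
        (fun i => if i + 1 < k then TTree.node (Sum.inl (none, i+1)) [] else σ (i+1)))
      = encMP n (List.replicate (k-1) ([] : List Γ) ++ w' :: vs.drop k) := by
  rw [encMP]; congr 1
  apply List.ext_getElem (by simp)
  intro i h1 h2
  simp only [List.getElem_map, List.getElem_range]
  have hin : i < n := by simpa using h1
  by_cases hlt : i + 1 < k
  · rw [if_pos hlt, List.getD_append _ _ _ _ (by simp; omega)]
    have : (List.replicate (k-1) ([] : List Γ)).getD i [] = [] := by
      simp only [List.getD_eq_getElem?_getD, List.getElem?_replicate]
      rw [if_pos (by omega)]; rfl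
    rw [this, encW]
  · rw [if_neg hlt]
    by_cases hik : i = k - 1
    · subst hik
      have hk : k - 1 + 1 = k := by omega
      rw [hk, hσk]
      have : (List.replicate (k-1) ([] : List Γ) ++ w' :: vs.drop k).getD (k-1) [] = w' := by
        rw [List.getD_eq_getElem?_getD, List.getElem?_append_right (by simp)]
        simp
      rw [this]
    · have hgt : k ≤ i := by omega
      rw [hσ i hin hik]
      have : (List.replicate (k-1) ([] : List Γ) ++ w' :: vs.drop k).getD i []
          = vs.getD i [] := by
        rw [List.getD_eq_getElem?_getD, List.getElem?_append_right (by simp; omega)]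
        simp only [List.length_replicate]
        have h3 : i - (k - 1) = (i - k) + 1 := by omega
        rw [h3]
        simp [List.getElem?_cons_succ, List.getElem?_drop,
          List.getD_eq_getElem?_getD]
        congr 2
        omega
      rw [this]

lemma encMP_children_get (n : ℕ) (vs : List (List Γ))
    {L : List (TTree (MSym Γ))}
    (h : encMP n vs = TTree.node (Sum.inr ()) L) :
    ∀ i < n, L[i]? = some (encW (i+1) (vs.getD i [])) := by
  intro i hi
  have hL := (node_inj h).2
  rw [← hL]
  simp [hi]

lemma encW_inj {k : ℕ} : ∀ {w w' : List Γ}, encW k w = encW k w' → w = w' := by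
  intro w
  induction w with
  | nil =>
    intro w' h
    cases w' with
    | nil => rfl
    | cons b w' => exact absurd h (by simp [encW])
  | cons a w ih =>
    intro w' h
    cases w' with
    | nil => exact absurd h (by simp [encW])
    | cons b w' =>
      simp only [encW, TTree.node.injEq, Sum.inl.injEq, Prod.mk.injEq,
        Option.some.injEq, List.cons.injEq, and_true] at h
      obtain ⟨h1, h2⟩ := h
      rw [h1, ih h2]

lemma encMP_inj (n : ℕ) (vs vs' : List (List Γ)) (h1 : vs.length = n)
    (h2 : vs'.length = n) (h : encMP n vs = encMP n vs') : vs = vs' := by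
  have hc := (node_inj h).2
  apply List.ext_getElem (by omega)
  intro i hi1 hi2
  have hin : i < n := by omega
  have h3 := congrArg (fun l => l[i]?) hc
  simp only [List.getElem?_map, List.getElem?_range, hin, if_pos, Option.map_some] at h3
  rw [Option.some_inj] at h3
  have h4 := encW_inj h3
  rwa [List.getD_eq_getElem vs [] hi1, List.getD_eq_getElem vs' [] hi2] at h4

end Helpers

section Trans
variable {Γ Q : Type}

/-- Encoding of a multi-pushdown configuration as a tree configuration. -/
def encC {Γ Q : Type} (n : ℕ) : Q × List (List Γ) → Q × TTree (MSym Γ) :=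
  fun c => (c.1, encMP n c.2)

lemma pop_lhs_eq_encMP (n k : ℕ) (a : Γ) (hk1 : 1 ≤ k) (hkn : k ≤ n)
    (σ : ℕ → TTree (MSym Γ)) (vs : List (List Γ)) (w' : List Γ)
    (hpop : vs.getD (k-1) [] = a :: w') (hσk : σ k = encW k w')
    (hσ : ∀ i < n, i ≠ k - 1 → σ (i+1) = encW (i+1) (vs.getD i [])) :
    TTree.node (Sum.inr ()) (((List.range n).map (fun i => σ (i+1))).set (k-1)
        (.node (.inl (some a, k)) [σ k]))
      = encMP n vs := by
  rw [encMP]; congr 1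
  apply List.ext_getElem (by simp)
  intro i h1 h2
  simp only [List.getElem_set, List.getElem_map, List.getElem_range]
  have hin : i < n := by simpa using h2
  by_cases hik : k - 1 = i
  · subst hik
    rw [if_pos rfl, hσk, hpop]
    have hk : k - 1 + 1 = k := by omega
    rw [hk, encW]
  · rw [if_neg hik, hσ i hin (fun hh => hik hh.symm)]

lemma push_match (n : ℕ) (σ : ℕ → TTree (MSym Γ)) (vs : List (List Γ))
    (h : encMP n vs = TTree.node (Sum.inr ())
        ((List.range n).map (fun i => σ (i+1)))) :
    ∀ i < n, σ (i+1) = encW (i+1) (vs.getD i []) := by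
  intro i hi
  have hc := (node_inj h).2
  have h3 := congrArg (fun l => l[i]?) hc
  simp only [List.getElem?_map, List.getElem?_range, hi, if_pos, Option.map_some] at h3
  rw [Option.some_inj] at h3
  exact h3.symm

lemma pop_match (n k : ℕ) (a : Γ) (hk1 : 1 ≤ k) (hkn : k ≤ n)
    (σ : ℕ → TTree (MSym Γ)) (vs : List (List Γ))
    (h : encMP n vs = TTree.node (Sum.inr ())
        (((List.range n).map (fun i => σ (i+1))).set (k-1)
          (.node (.inl (some a, k)) [σ k]))) :
    (∃ w', vs.getD (k-1) [] = a :: w' ∧ σ k = encW k w') ∧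
      ∀ i < n, i ≠ k - 1 → σ (i+1) = encW (i+1) (vs.getD i []) := by
  have hc := (node_inj h).2
  constructor
  · have h3 := congrArg (fun l => l[k-1]?) hc
    have hkn' : k - 1 < n := by omega
    simp only [List.getElem?_set, List.getElem?_map, List.getElem?_range, hkn',
      if_pos, Option.map_some, List.length_map, List.length_range, if_true] at h3
    rw [Option.some_inj] at h3
    have hk : k - 1 + 1 = k := by omega
    rw [hk] at h3
    exact encW_eq_cons.mp h3
  · intro i hi hik
    have h3 := congrArg (fun l => l[i]?) hc
    simp only [List.getElem?_set, List.getElem?_map, List.getElem?_range, hi,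
      if_pos, Option.map_some, List.length_map, List.length_range] at h3
    rw [if_neg (fun hh => hik hh.symm)] at h3
    rw [Option.some_inj] at h3
    exact h3.symm

lemma hO_bounds {O : OMPDS Γ Q} (hO : O.WF) {r} (hr : r ∈ O.rules) :
    match r.2.1 with
    | .push k _ => 1 ≤ k ∧ k ≤ O.n
    | .pop k _ => 1 ≤ k ∧ k ≤ O.n := hO.2 r hr

lemma trans_fwd (O : OMPDS Γ Q) {c : Q × List (List Γ)} {D}
    (h : O.trans c D) :
    (encodeMPDS O).trans (encC O.n c) (encC O.n '' D) := by
  obtain ⟨hlen, r, hr, hp, hcase⟩ := h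
  rcases hcase with ⟨k, a, hop, hk1, hkn, hD⟩ | ⟨k, a, w', hop, hk1, hkn, hpop, hD⟩
  · refine ⟨pushRule O.n r.1 k a r.2.2, ⟨r, hr, Or.inl ⟨k, a, hop, rfl⟩⟩,
      fun i => encW i (c.2.getD (i-1) []), ?_, ?_, ?_⟩
    · intro x _; exact encW_ord O.n x _
    · have e1 : substG (fun i => encW i (c.2.getD (i-1) []))
          (pushRule O.n r.1 k a r.2.2).lhs = encMP O.n c.2 :=
        (substG_push_lhs _ O.n r.1 k a r.2.2).trans
          (bullet_eq_encMP O.n (fun i => encW i (c.2.getD (i-1) [])) c.2 (fun i hi => by simp))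
      rw [show (pushRule O.n r.1 k a r.2.2).p = r.1 from rfl, e1, encC, hp]
    · have e2 : substG (fun i => encW i (c.2.getD (i-1) []))
          (pushRule O.n r.1 k a r.2.2).rhs
          = encMP O.n (c.2.set (k-1) (a :: c.2.getD (k-1) [])) :=
        (substG_push_rhs _ O.n r.1 k a r.2.2).trans
          (push_set_eq_encMP O.n k a hk1 hkn (fun i => encW i (c.2.getD (i-1) [])) c.2 hlen (fun i hi => by simp))
      rw [show (pushRule O.n r.1 k a r.2.2).tgt = r.2.2 from rfl, e2,
        hD, Set.image_image]
      rfl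
  · refine ⟨popRule O.n r.1 k a r.2.2, ⟨r, hr, Or.inr ⟨k, a, hop, rfl⟩⟩,
      fun i => if i = k then encW k w' else encW i (c.2.getD (i-1) []), ?_, ?_, ?_⟩
    · intro x _
      by_cases hx : x = k
      · subst hx; simp only [if_pos rfl]; exact encW_ord O.n x w'
      · simp only [if_neg hx]; exact encW_ord O.n x _
    · have e1 : substG (fun i => if i = k then encW k w' else encW i (c.2.getD (i-1) []))
          (popRule O.n r.1 k a r.2.2).lhs = encMP O.n c.2 :=
        (substG_pop_lhs _ O.n r.1 k a r.2.2).trans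
          (pop_lhs_eq_encMP O.n k a hk1 hkn
            (fun i => if i = k then encW k w' else encW i (c.2.getD (i-1) []))
            c.2 w' hpop (by simp)
            (fun i hi hik => by simp [show i + 1 ≠ k by omega]))
      rw [show (popRule O.n r.1 k a r.2.2).p = r.1 from rfl, e1, encC, hp]
    · have e2 : substG (fun i => if i = k then encW k w' else encW i (c.2.getD (i-1) []))
          (popRule O.n r.1 k a r.2.2).rhs
          = encMP O.n (List.replicate (k-1) ([] : List Γ) ++ w' :: c.2.drop k) :=
        (substG_pop_rhs _ O.n r.1 k a r.2.2).trans
          (pop_rhs_eq_encMP O.n k hk1 hkn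
            (fun i => if i = k then encW k w' else encW i (c.2.getD (i-1) []))
            c.2 w' hlen (by simp)
            (fun i hi hik => by simp [show i + 1 ≠ k by omega]))
      rw [show (popRule O.n r.1 k a r.2.2).tgt = r.2.2 from rfl, e2,
        hD, Set.image_image]
      rfl

lemma trans_bwd (O : OMPDS Γ Q) (hO : O.WF) {c : Q × List (List Γ)} {E}
    (hlen : c.2.length = O.n)
    (h : (encodeMPDS O).trans (encC O.n c) E) :
    ∃ D, O.trans c D ∧ (∀ d ∈ D, d.2.length = O.n) ∧ E = encC O.n '' D := by
  obtain ⟨ru, ⟨r, hr, hru⟩, σ, hord, hc, hE⟩ := h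
  rcases hru with ⟨k, a, hop, rfl⟩ | ⟨k, a, hop, rfl⟩
  · obtain ⟨hk1, hkn⟩ : 1 ≤ k ∧ k ≤ O.n := by
      have := hO_bounds hO hr; rw [hop] at this; exact this
    rw [Prod.ext_iff] at hc
    obtain ⟨hq, ht⟩ := hc
    rw [show (pushRule O.n r.1 k a r.2.2).p = r.1 from rfl] at hq
    rw [substG_push_lhs] at ht
    have hσ := push_match O.n σ c.2 ht
    refine ⟨(fun q' => (q', c.2.set (k-1) (a :: c.2.getD (k-1) []))) '' r.2.2,
      ⟨hlen, r, hr, hq.symm, Or.inl ⟨k, a, hop, hk1, hkn, rfl⟩⟩,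
      ?_, ?_⟩
    · rintro d ⟨q', hq', rfl⟩; simpa using hlen
    · rw [hE, show (pushRule O.n r.1 k a r.2.2).tgt = r.2.2 from rfl,
        substG_push_rhs, push_set_eq_encMP O.n k a hk1 hkn σ c.2 hlen hσ,
        Set.image_image]
      rfl
  · obtain ⟨hk1, hkn⟩ : 1 ≤ k ∧ k ≤ O.n := by
      have := hO_bounds hO hr; rw [hop] at this; exact this
    rw [Prod.ext_iff] at hc
    obtain ⟨hq, ht⟩ := hc
    rw [show (popRule O.n r.1 k a r.2.2).p = r.1 from rfl] at hq
    rw [substG_pop_lhs] at ht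
    obtain ⟨⟨w', hpop, hσk⟩, hσ⟩ := pop_match O.n k a hk1 hkn σ c.2 ht
    refine ⟨(fun q' => (q', List.replicate (k-1) ([] : List Γ) ++ w' :: c.2.drop k))
        '' r.2.2,
      ⟨hlen, r, hr, hq.symm, Or.inr ⟨k, a, w', hop, hk1, hkn, hpop, rfl⟩⟩,
      ?_, ?_⟩
    · rintro d ⟨q', hq', rfl⟩; simp; omega
    · rw [hE, show (popRule O.n r.1 k a r.2.2).tgt = r.2.2 from rfl,
        substG_pop_rhs, pop_rhs_eq_encMP O.n k hk1 hkn σ c.2 w' hlen hσk hσ,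
        Set.image_image]
      rfl

lemma step1_mono_src {C : Type} {tr : C → Set C → Prop} {A A' B : Set C}
    (hA : A' ⊆ A) (h : Step1 tr A B) : Step1 tr A' B :=
  fun c hc => h c (hA hc)

lemma rtg_mono_src {C : Type} {tr : C → Set C → Prop} {A A' T : Set C} (hA : A' ⊆ A)
    (h : Relation.ReflTransGen (Step1 tr) A T) :
    Relation.ReflTransGen (Step1 tr) A' T := by
  rcases h.cases_head with rfl | ⟨B, h1, h2⟩
  · exact Relation.ReflTransGen.single (fun c hc => Or.inl (hA hc))
  · exact Relation.ReflTransGen.head (step1_mono_src hA h1) h2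

lemma rtg_mono_tgt {C : Type} {tr : C → Set C → Prop} {A B B' : Set C} (hB : B ⊆ B')
    (h : Relation.ReflTransGen (Step1 tr) A B) :
    Relation.ReflTransGen (Step1 tr) A B' := by
  induction h with
  | refl => exact Relation.ReflTransGen.single (fun c hc => Or.inl (hB hc))
  | tail h1 h2 _ =>
    exact h1.tail (fun c hc => (h2 c hc).imp (fun hh => hB hh)
      (fun ⟨D, hD, hDB⟩ => ⟨D, hD, hDB.trans hB⟩))

lemma step1_fwd (O : OMPDS Γ Q) {A B : Set (Q × List (List Γ))}
    (h : Step1 O.trans A B) :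
    Step1 (encodeMPDS O).trans (encC O.n '' A) (encC O.n '' B) := by
  rintro c' ⟨c, hc, rfl⟩
  rcases h c hc with hB | ⟨D, hD, hDB⟩
  · exact Or.inl (Set.mem_image_of_mem _ hB)
  · exact Or.inr ⟨encC O.n '' D, trans_fwd O hD, Set.image_mono hDB⟩

/-- Decoding of a set of tree configurations. -/
def decS {Γ Q : Type} (n : ℕ) (B : Set (Q × TTree (MSym Γ))) :
    Set (Q × List (List Γ)) :=
  {c | c.2.length = n ∧ encC n c ∈ B}

lemma step1_bwd (O : OMPDS Γ Q) (hO : O.WF) {A B : Set (Q × TTree (MSym Γ))}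
    (h : Step1 (encodeMPDS O).trans A B) :
    Step1 O.trans (decS O.n A) (decS O.n B) := by
  rintro c ⟨hlen, hA⟩
  rcases h _ hA with hB | ⟨E, hE, hEB⟩
  · exact Or.inl ⟨hlen, hB⟩
  · obtain ⟨D, hD, hDlen, rfl⟩ := trans_bwd O hO hlen hE
    exact Or.inr ⟨D, hD, fun d hd => ⟨hDlen d hd, hEB (Set.mem_image_of_mem _ hd)⟩⟩

end Trans

/-- Correctness of the encoding of ordered multi-pushdown systems
into AOTPSs: `(p, w₁,…,w_n) →*_O P × {(w'₁,…,w'_n)}` iff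
`(p, enc(w₁,…,w_n)) →*_S P × {enc(w'₁,…,w'_n)}`; hence the encoding preserves
reachability properties. -/
theorem encodeMPDS_correct {Γ Q : Type} (O : OMPDS Γ Q) (hO : O.WF)
    (p : Q) (ws ws' : List (List Γ)) (P' : Set Q)
    (hws : ws.length = O.n) (hws' : ws'.length = O.n) :
    Relation.ReflTransGen (Step1 O.trans)
        {(p, ws)} ((fun q => (q, ws')) '' P') ↔
      Relation.ReflTransGen (Step1 (encodeMPDS O).trans)
        {(p, encMP O.n ws)} ((fun q => (q, encMP O.n ws')) '' P') := by
  constructor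
  · intro h
    have h2 := Relation.ReflTransGen.lift (encC O.n '' ·)
      (fun _ _ hab => step1_fwd O hab) _ _ h
    simp only [Function.onFun, Set.image_singleton, Set.image_image] at h2
    exact h2
  · intro h
    have h2 := Relation.ReflTransGen.lift (decS O.n)
      (fun _ _ hab => step1_bwd O hO hab) _ _ h
    have hsub : ({(p, ws)} : Set (Q × List (List Γ)))
        ⊆ decS O.n {(p, encMP O.n ws)} := by
      rintro c rfl
      exact ⟨hws, rfl⟩
    have htgt : decS O.n ((fun q => (q, encMP O.n ws')) '' P')
        ⊆ (fun q => (q, ws')) '' P' := by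
      rintro c ⟨hlen, q, hq, hce⟩
      rw [Prod.ext_iff] at hce
      obtain ⟨h1, h2⟩ := hce
      have := encMP_inj O.n ws' c.2 hws' hlen h2
      exact ⟨c.1, h1 ▸ hq, by rw [this]⟩
    exact rtg_mono_tgt htgt (rtg_mono_src hsub h2)


end OTPS
end
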